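/- arXiv:2508.18487 — 3 statements merged into one kernel-verified Lean document; each statement's English description precedes it below -/
import Mathlib

section
/- If G is a simple graph containing at least one edge and having chromatic number at most 3, then ψ_{d,min}(G) = 2; in particular, G admits an orientation that contains no alternating odd cycle. -/
universe u

/-- An orientation of a simple graph: each edge receives exactly one of its two directions. -/
structure GraphOrientation {V : Type u} (G : SimpleGraph V) where
  dir : V → V → Prop
  adj_iff : ∀ u v, G.Adj u v ↔ (dir u v ∨ dir v u)
  asymm : ∀ u v, dir u v → ¬ dir v u

/-- The closed out-neighborhood of a vertex in an orientation. -/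
def GraphOrientation.closedOutNbhd {V : Type u} {G : SimpleGraph V}
    (D : GraphOrientation G) (v : V) : Set V :=
  insert v {u | D.dir v u}

/-- The directed local chromatic number of an oriented graph: the least `n` such that some
proper coloring of the underlying graph puts at most `n` colors on every closed
out-neighborhood. -/
noncomputable def psiD {V : Type u} {G : SimpleGraph V} (D : GraphOrientation G) : ℕ∞ :=
  sInf {n : ℕ∞ | ∃ c : V → ℕ, (∀ u w, G.Adj u w → c u ≠ c w) ∧
    ∀ v, (c '' D.closedOutNbhd v).encard ≤ n}

/-- `ψ_{d,min}`: the minimum of `ψ_d` over all orientations of `G`. -/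
noncomputable def psiDMin {V : Type u} (G : SimpleGraph V) : ℕ∞ :=
  ⨅ D : GraphOrientation G, psiD D

/-- `f : ZMod n → V` describes a cycle of length `n` in `G`. -/
def SimpleGraph.IsCycleMap {V : Type u} (G : SimpleGraph V) {n : ℕ} (f : ZMod n → V) : Prop :=
  Function.Injective f ∧ ∀ i, G.Adj (f i) (f (i + 1))

/-- The cycle described by `f` is alternating with respect to the direction relation `D`:
exactly one of its vertices is neither a source nor a sink of the cycle. -/
def IsAltCycle {V : Type u} (D : V → V → Prop) {n : ℕ} (f : ZMod n → V) : Prop :=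
  ∃! i : ZMod n,
    ¬ ((D (f i) (f (i - 1)) ∧ D (f i) (f (i + 1))) ∨
       (D (f (i - 1)) (f i) ∧ D (f (i + 1)) (f i)))

/-- The orientation `D` of `G` contains an alternating odd cycle. -/
def HasAltOddCycle {V : Type u} {G : SimpleGraph V} (D : GraphOrientation G) : Prop :=
  ∃ (n : ℕ) (f : ZMod n → V), Odd n ∧ G.IsCycleMap f ∧ IsAltCycle D.dir f

/-- The odd girth of `G`: the length of a shortest odd cycle. -/
noncomputable def oddGirth {V : Type u} (G : SimpleGraph V) : ℕ :=
  sInf {n | Odd n ∧ ∃ f : ZMod n → V, G.IsCycleMap f}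

/-- The symmetric shift graph `S_m`. -/
def shiftGraph (m : ℕ) : SimpleGraph {p : Fin m × Fin m // p.1 ≠ p.2} where
  Adj x y := x.1.2 = y.1.1 ∨ x.1.1 = y.1.2
  symm := ⟨fun _ _ h => h.elim (fun h => Or.inr h.symm) (fun h => Or.inl h.symm)⟩
  loopless := ⟨fun x h => h.elim (fun h => x.2 h.symm) (fun h => x.2 h)⟩

/-- The Kneser graph `KG(n,k)`. -/
def kneserGraph (n k : ℕ) : SimpleGraph {A : Finset (Fin n) // A.card = k} where
  Adj A B := Disjoint A.1 B.1 ∧ A ≠ B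
  symm := ⟨fun _ _ h => ⟨h.1.symm, h.2.symm⟩⟩
  loopless := ⟨fun _ h => h.2 rfl⟩

/-- A subset of `Fin n` (thought of as `[n]` arranged cyclically) is stable if it contains
no two cyclically consecutive elements. -/
def IsStableSet {n : ℕ} (A : Finset (Fin n)) : Prop :=
  ∀ i ∈ A, ∀ j ∈ A, (i.val + 1) % n ≠ j.val

/-- The Schrijver graph `SG(n,k)`. -/
def schrijverGraph (n k : ℕ) :
    SimpleGraph {A : Finset (Fin n) // A.card = k ∧ IsStableSet A} where
  Adj A B := Disjoint A.1 B.1 ∧ A ≠ B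
  symm := ⟨fun _ _ h => ⟨h.1.symm, h.2.symm⟩⟩
  loopless := ⟨fun _ h => h.2 rfl⟩

/-- The `r`-level generalized Mycielskian `M_r(G)`; `none` is the apex vertex `z`. -/
def genMycielskian {V : Type u} (G : SimpleGraph V) (r : ℕ) :
    SimpleGraph (Option (V × Fin r)) where
  Adj x y :=
    match x, y with
    | some (u, i), some (v, j) =>
        G.Adj u v ∧ (i.val + 1 = j.val ∨ j.val + 1 = i.val ∨ (i.val = 0 ∧ j.val = 0))
    | some (_, i), none => i.val = r - 1
    | none, some (_, j) => j.val = r - 1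
    | none, none => False
  symm := by
    refine ⟨?_⟩
    rintro (_ | ⟨u, i⟩) (_ | ⟨v, j⟩) h
    · exact h
    · exact h
    · exact h
    · exact ⟨h.1.symm, by tauto⟩
  loopless := by
    refine ⟨?_⟩
    rintro (_ | ⟨u, i⟩) h
    · exact h
    · exact G.loopless.irrefl u h.1

private lemma zmod3_cases : ∀ x y : ZMod 3, x ≠ y → (y = x + 1 ∨ x = y + 1) := by decide

private lemma zmod3_asymm : ∀ x : ZMod 3, ¬ x = x + 1 + 1 := by decide

/-- The cyclic orientation induced by a proper 3-coloring. -/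
def cycOrient {V : Type u} (G : SimpleGraph V) (c : V → ZMod 3)
    (hc : ∀ u w, G.Adj u w → c u ≠ c w) : GraphOrientation G where
  dir u v := G.Adj u v ∧ c v = c u + 1
  adj_iff u v := by
    constructor
    · intro h
      rcases zmod3_cases (c u) (c v) (hc u v h) with h1 | h1
      · exact Or.inl ⟨h, h1⟩
      · exact Or.inr ⟨h.symm, h1⟩
    · rintro (⟨h, _⟩ | ⟨h, _⟩)
      · exact h
      · exact h.symm
  asymm u v := by
    rintro ⟨_, h1⟩ ⟨_, h2⟩
    rw [h1] at h2
    exact zmod3_asymm (c u) h2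

private lemma cycOrient_no_alt {V : Type u} (G : SimpleGraph V) (c : V → ZMod 3)
    (hc : ∀ u w, G.Adj u w → c u ≠ c w) : ¬ HasAltOddCycle (cycOrient G c hc) := by
  rintro ⟨n, f, hodd, ⟨finj, hadj⟩, i₀, hi₀, huniq⟩
  haveI : NeZero n := ⟨hodd.pos.ne'⟩
  set d : ZMod n → ZMod 3 := fun i => c (f (i + 1)) - c (f i) with hd
  have hdirval : ∀ i : ZMod n, d i = 1 ∨ d i = -1 := by
    intro i
    rcases ((cycOrient G c hc).adj_iff _ _).mp (hadj i) with ⟨_, h⟩ | ⟨_, h⟩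
    · left; simp only [hd]; linear_combination h
    · right; simp only [hd]; linear_combination -h
  have hC : ∀ i : ZMod n, i ≠ i₀ → d i = - d (i - 1) := by
    intro i hi
    have hss : ((cycOrient G c hc).dir (f i) (f (i - 1)) ∧
        (cycOrient G c hc).dir (f i) (f (i + 1))) ∨
        ((cycOrient G c hc).dir (f (i - 1)) (f i) ∧
        (cycOrient G c hc).dir (f (i + 1)) (f i)) := by
      by_contra h
      exact hi (huniq i h)
    have hcan : i - 1 + 1 = i := sub_add_cancel i 1
    rcases hss with ⟨⟨_, h1⟩, ⟨_, h2⟩⟩ | ⟨⟨_, h1⟩, ⟨_, h2⟩⟩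
    · simp only [hd, hcan]
      linear_combination h2 - h1
    · simp only [hd, hcan]
      linear_combination h1 - h2
  have hsum : ∑ i : ZMod n, d i = 0 := by
    have hshift1 : ∑ i : ZMod n, c (f (i + 1)) = ∑ i : ZMod n, c (f i) :=
      Fintype.sum_equiv (Equiv.addRight (1 : ZMod n)) _ _ (fun i => rfl)
    rw [hd]
    rw [Finset.sum_sub_distrib, hshift1, sub_self]
  have key : ∀ k : ℕ, k < n → d (i₀ + (k : ZMod n)) = (-1) ^ k * d i₀ := by
    intro k
    induction k with
    | zero => intro _; simp
    | succ k ih =>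
      intro hk
      have hklt : k < n := Nat.lt_of_succ_lt hk
      have hne : (i₀ + ((k + 1 : ℕ) : ZMod n)) ≠ i₀ := by
        intro h
        have h0 : ((k + 1 : ℕ) : ZMod n) = 0 := by
          have := congrArg (fun x => x - i₀) h
          simpa [add_sub_cancel_left] using this
        have hdvd : n ∣ k + 1 := (ZMod.natCast_eq_zero_iff _ _).mp h0
        exact absurd (Nat.le_of_dvd (Nat.succ_pos k) hdvd) (not_le.mpr hk)
      have hflip := hC _ hne
      have hsub : i₀ + ((k + 1 : ℕ) : ZMod n) - 1 = i₀ + (k : ZMod n) := by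
        push_cast
        ring
      rw [hflip, hsub, ih hklt]
      ring
  have hshift : ∑ i : ZMod n, d i = ∑ i : ZMod n, d (i₀ + i) :=
    (Fintype.sum_equiv (Equiv.addLeft i₀) _ _ (fun i => rfl)).symm
  have hval : ∀ i : ZMod n, d (i₀ + i) = (-1) ^ (i.val) * d i₀ := by
    intro i
    have h := key i.val (ZMod.val_lt i)
    rwa [ZMod.natCast_rightInverse i] at h
  have hpow : ∑ i : ZMod n, ((-1 : ZMod 3)) ^ (i.val) = ∑ k ∈ Finset.range n, (-1 : ZMod 3) ^ k := by
    refine Finset.sum_nbij' (fun i => i.val) (fun k => (k : ZMod n)) ?_ ?_ ?_ ?_ ?_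
    · intro a _; exact Finset.mem_range.mpr (ZMod.val_lt a)
    · intro a _; exact Finset.mem_univ _
    · intro a _; exact ZMod.natCast_rightInverse a
    · intro a ha; exact ZMod.val_cast_of_lt (Finset.mem_range.mp ha)
    · intro a _; rfl
  have hfinal : (0 : ZMod 3) = d i₀ := by
    calc (0 : ZMod 3) = ∑ i : ZMod n, d i := hsum.symm
      _ = ∑ i : ZMod n, d (i₀ + i) := hshift
      _ = ∑ i : ZMod n, (-1) ^ (i.val) * d i₀ := by
          exact Finset.sum_congr rfl (fun i _ => hval i)
      _ = (∑ i : ZMod n, ((-1 : ZMod 3)) ^ (i.val)) * d i₀ := by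
          rw [Finset.sum_mul]
      _ = (∑ k ∈ Finset.range n, (-1 : ZMod 3) ^ k) * d i₀ := by rw [hpow]
      _ = (if Even n then 0 else 1) * d i₀ := by rw [neg_one_geom_sum]
      _ = d i₀ := by rw [if_neg (Nat.not_even_iff_odd.mpr hodd), one_mul]
  rcases hdirval i₀ with h | h <;> rw [h] at hfinal <;> exact absurd hfinal (by decide)

theorem statement1 {V : Type u} (G : SimpleGraph V)
    (hedge : ∃ u v, G.Adj u v) (hchrom : G.chromaticNumber ≤ 3) :
    psiDMin G = 2 ∧ ∃ D : GraphOrientation G, ¬ HasAltOddCycle D := by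
  have hcol : G.Colorable 3 := by
    rw [← SimpleGraph.chromaticNumber_le_iff_colorable]
    exact_mod_cast hchrom
  have C : G.Coloring (ZMod 3) := hcol.toColoring (by simp)
  set c : V → ZMod 3 := fun v => C v with hcdef
  have hc : ∀ u w, G.Adj u w → c u ≠ c w := fun u w h => C.valid h
  set D := cycOrient G c hc with hD
  -- upper bound: psiD D ≤ 2
  have hub : psiD D ≤ 2 := by
    apply sInf_le
    refine ⟨fun v => (c v).val, ?_, ?_⟩
    · intro u w h hval
      exact hc u w h (ZMod.val_injective 3 hval)
    · intro v
      have hsub : (fun u => (c u).val) '' D.closedOutNbhd v ⊆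
          {(c v).val, (c v + 1).val} := by
        rintro x ⟨u, hu, rfl⟩
        rcases hu with rfl | hdir
        · exact Or.inl rfl
        · exact Or.inr (congrArg ZMod.val hdir.2)
      calc ((fun u => (c u).val) '' D.closedOutNbhd v).encard
          ≤ ({(c v).val, (c v + 1).val} : Set ℕ).encard := Set.encard_mono hsub
        _ ≤ ({(c v + 1).val} : Set ℕ).encard + 1 := Set.encard_insert_le _ _
        _ ≤ 2 := by rw [Set.encard_singleton]; norm_num
  -- lower bound: ∀ D', 2 ≤ psiD D'
  have hlb : ∀ D' : GraphOrientation G, (2 : ℕ∞) ≤ psiD D' := by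
    intro D'
    apply le_sInf
    rintro m ⟨cc, hcc, hb⟩
    obtain ⟨u, v, huv⟩ := hedge
    rcases (D'.adj_iff u v).mp huv with h | h
    · have hsub : ({cc u, cc v} : Set ℕ) ⊆ cc '' D'.closedOutNbhd u := by
        rintro x (rfl | rfl)
        · exact ⟨u, Or.inl rfl, rfl⟩
        · exact ⟨v, Or.inr h, rfl⟩
      calc (2 : ℕ∞) = ({cc u, cc v} : Set ℕ).encard := (Set.encard_pair (hcc u v huv)).symm
        _ ≤ (cc '' D'.closedOutNbhd u).encard := Set.encard_mono hsub
        _ ≤ m := hb u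
    · have hsub : ({cc v, cc u} : Set ℕ) ⊆ cc '' D'.closedOutNbhd v := by
        rintro x (rfl | rfl)
        · exact ⟨v, Or.inl rfl, rfl⟩
        · exact ⟨u, Or.inr h, rfl⟩
      calc (2 : ℕ∞) = ({cc v, cc u} : Set ℕ).encard :=
            (Set.encard_pair (hcc v u huv.symm)).symm
        _ ≤ (cc '' D'.closedOutNbhd v).encard := Set.encard_mono hsub
        _ ≤ m := hb v
  constructor
  · refine le_antisymm ?_ (le_iInf hlb)
    exact iInf_le_of_le D hub
  · exact ⟨D, cycOrient_no_alt G c hc⟩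
end

section
/- There exists a graph homomorphism from the Grötzsch graph M₂(C₅) (the Mycielskian of the 5-cycle) to the symmetric shift graph S_4. -/
universe u

/-- The cycle `C₅`. -/
def cycle5 : SimpleGraph (ZMod 5) where
  Adj x y := y = x + 1 ∨ x = y + 1
  symm := ⟨fun _ _ h => h.symm⟩
  loopless := by
    refine ⟨?_⟩
    intro x h
    rcases h with h | h <;> exact (by decide : (1 : ZMod 5) ≠ 0) (left_eq_add.mp h)

instance : DecidableRel cycle5.Adj := fun x y => by
  dsimp [cycle5]; infer_instance

instance : DecidableRel (genMycielskian cycle5 2).Adj := fun a b => by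
  rcases a with _ | ⟨u, i⟩ <;> rcases b with _ | ⟨v, j⟩ <;>
    dsimp [genMycielskian] <;> infer_instance

instance : DecidableRel (shiftGraph 4).Adj := fun x y => by
  dsimp [shiftGraph]; infer_instance

def grotzschMap : Option (ZMod 5 × Fin 2) → {p : Fin 4 × Fin 4 // p.1 ≠ p.2}
  | none => ⟨(2, 3), by decide⟩
  | some (v, i) =>
    if i.val = 0 then
      match v with
      | 0 => ⟨(0, 1), by decide⟩
      | 1 => ⟨(1, 0), by decide⟩
      | 2 => ⟨(0, 2), by decide⟩
      | 3 => ⟨(2, 1), by decide⟩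
      | 4 => ⟨(1, 3), by decide⟩
    else
      match v with
      | 0 => ⟨(3, 1), by decide⟩
      | 1 => ⟨(3, 0), by decide⟩
      | 2 => ⟨(0, 2), by decide⟩
      | 3 => ⟨(3, 0), by decide⟩
      | 4 => ⟨(1, 2), by decide⟩

theorem statement11 : Nonempty (genMycielskian cycle5 2 →g shiftGraph 4) := by
  have h : ∀ a b, (genMycielskian cycle5 2).Adj a b →
      (shiftGraph 4).Adj (grotzschMap a) (grotzschMap b) := by decide
  exact ⟨⟨grotzschMap, fun {a b} => h a b⟩⟩
end

section
/- For integers p ≥ 2q ≥ 2, the rational complete graph K_{p/q} admits an orientation that contains no alternating odd cycle if and only if p ≤ 3q. -/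
universe u

/-- The rational complete graph `K_{p/q}`. -/
def ratComplete (p q : ℕ) : SimpleGraph (Fin p) where
  Adj a b := (q : ℤ) ≤ |((a : ℕ) : ℤ) - ((b : ℕ) : ℤ)| ∧
    |((a : ℕ) : ℤ) - ((b : ℕ) : ℤ)| ≤ (p : ℤ) - (q : ℤ) ∧ a ≠ b
  symm := by
    refine ⟨?_⟩
    intro a b h
    refine ⟨?_, ?_, h.2.2.symm⟩ <;> rw [abs_sub_comm]
    · exact h.1
    · exact h.2.1
  loopless := ⟨fun a h => h.2.2 rfl⟩

namespace AuxStatement14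

lemma mod_tight {x n : ℕ} (hn : 0 < n) (h : x < 2 * n) :
    x % n = if x < n then x else x - n := by
  split_ifs with h'
  · exact Nat.mod_eq_of_lt h'
  · rw [Nat.mod_eq_sub_mod (by omega)]
    exact Nat.mod_eq_of_lt (by omega)

/-- shift a vertex of `Fin p` forward by `ℓ` (mod p). -/
def sh {p : ℕ} (hp : 0 < p) (a : Fin p) (ℓ : ℕ) : Fin p :=
  ⟨(a.val + ℓ) % p, Nat.mod_lt _ hp⟩

lemma sh_val {p : ℕ} (hp : 0 < p) (a : Fin p) (ℓ : ℕ) :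
    (sh hp a ℓ).val = (a.val + ℓ) % p := rfl

lemma sh_sh {p : ℕ} (hp : 0 < p) (a : Fin p) (k l : ℕ) :
    sh hp (sh hp a k) l = sh hp a (k + l) := by
  unfold sh
  apply Fin.ext
  simp only [Nat.mod_add_mod]
  rw [Nat.add_assoc]

lemma sh_p {p : ℕ} (hp : 0 < p) (a : Fin p) : sh hp a p = a := by
  unfold sh
  apply Fin.ext
  simp [Nat.add_mod_right, Nat.mod_eq_of_lt a.isLt]

lemma sh_zero {p : ℕ} (hp : 0 < p) (a : Fin p) : sh hp a 0 = a := by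
  unfold sh
  apply Fin.ext
  simp [Nat.mod_eq_of_lt a.isLt]

lemma rc_adj {p q : ℕ} (hq : 1 ≤ q) {a b : Fin p} (d : ℕ)
    (h1 : q ≤ d) (h2 : d ≤ p - q)
    (h : a.val + d = b.val ∨ b.val + d = a.val) :
    (ratComplete p q).Adj a b := by
  have hqp : q < p := by have := a.isLt; omega
  have hne : a ≠ b := by
    intro hab
    subst hab
    omega
  rcases h with h | h
  · have habs : |((a : ℕ) : ℤ) - ((b : ℕ) : ℤ)| = (d : ℤ) := by
      rw [show ((a : ℕ) : ℤ) - ((b : ℕ) : ℤ) = -(d : ℤ) by omega, abs_neg, abs_of_nonneg]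
      positivity
    exact ⟨by rw [habs]; omega, by rw [habs]; omega, hne⟩
  · have habs : |((a : ℕ) : ℤ) - ((b : ℕ) : ℤ)| = (d : ℤ) := by
      rw [show ((a : ℕ) : ℤ) - ((b : ℕ) : ℤ) = (d : ℤ) by omega, abs_of_nonneg]
      positivity
    exact ⟨by rw [habs]; omega, by rw [habs]; omega, hne⟩

lemma rc_adj_elim {p q : ℕ} {a b : Fin p} (h : (ratComplete p q).Adj a b) :
    (q ≤ a.val - b.val ∧ a.val - b.val ≤ p - q) ∨
      (q ≤ b.val - a.val ∧ b.val - a.val ≤ p - q) := by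
  obtain ⟨h1, h2, hne⟩ := h
  have h3 := le_abs.mp h1
  have h4 := abs_le.mp h2
  obtain ⟨h5, h6⟩ := h4
  omega

lemma adj_sh {p q : ℕ} (hp : 0 < p) (hq : 1 ≤ q) (a : Fin p) (ℓ : ℕ)
    (h1 : q ≤ ℓ) (h2 : ℓ ≤ p - q) :
    (ratComplete p q).Adj a (sh hp a ℓ) := by
  have hqp : q < p := by have := a.isLt; omega
  have hb : (sh hp a ℓ).val = (a.val + ℓ) % p := rfl
  have hlt : a.val + ℓ < 2 * p := by have := a.isLt; omega
  rw [mod_tight hp hlt] at hb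
  by_cases hc : a.val + ℓ < p
  · rw [if_pos hc] at hb
    exact rc_adj hq ℓ h1 h2 (Or.inl hb.symm)
  · rw [if_neg hc] at hb
    refine rc_adj hq (p - ℓ) (by omega) (by omega) (Or.inr ?_)
    omega

end AuxStatement14
namespace AuxStatement14

lemma parity_sum (x : ZMod 3) (M : ℕ) :
    (∑ k ∈ Finset.range (2 * M + 1), (if k % 2 = 0 then x else -x)) = x := by
  induction M with
  | zero => simp
  | succ M ih =>
    have hh : 2 * (M + 1) + 1 = (2 * M + 1) + 1 + 1 := by ring
    rw [hh, Finset.sum_range_succ, Finset.sum_range_succ, ih]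
    rw [if_neg (by omega), if_pos (by omega)]
    ring

lemma sum_shift {n : ℕ} [NeZero n] (F : ZMod n → ZMod 3) (a : ZMod n) :
    (∑ i : ZMod n, F i) = ∑ k ∈ Finset.range n, F (a + (k : ZMod n)) := by
  rw [← Fintype.sum_bijective (fun i => a + i) (Equiv.addLeft a).bijective
      (fun i => F (a + i)) F (fun i => rfl)]
  refine Finset.sum_bij' (fun (i : ZMod n) _ => i.val) (fun k _ => (k : ZMod n)) ?_ ?_ ?_ ?_ ?_
  · intro i _
    exact Finset.mem_range.mpr (ZMod.val_lt i)
  · intro k _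
    exact Finset.mem_univ _
  · intro i _
    exact ZMod.natCast_rightInverse i
  · intro k hk
    exact ZMod.val_cast_of_lt (Finset.mem_range.mp hk)
  · intro i _
    rw [ZMod.natCast_rightInverse i]

end AuxStatement14
namespace AuxStatement14

def colA (q : ℕ) {p : ℕ} (v : Fin p) : ZMod 3 := ((min (v.val / q) 2 : ℕ) : ZMod 3)

lemma colA_ne {p q : ℕ} (hq : 1 ≤ q) (hp3 : p ≤ 3 * q) {u v : Fin p}
    (h : (ratComplete p q).Adj u v) : colA q u ≠ colA q v := by
  intro hc
  have hcast : ∀ x y : ℕ, x < 3 → y < 3 → ((x : ZMod 3) = (y : ZMod 3)) → x = y := by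
    intro x y hx hy hxy
    have hval := congrArg ZMod.val hxy
    rwa [ZMod.val_natCast, ZMod.val_natCast, Nat.mod_eq_of_lt hx, Nat.mod_eq_of_lt hy] at hval
  have hmin : min (u.val / q) 2 = min (v.val / q) 2 :=
    hcast _ _ (Nat.lt_succ_of_le (min_le_right _ _)) (Nat.lt_succ_of_le (min_le_right _ _)) hc
  have hadj := rc_adj_elim h
  have hu := u.isLt
  have hv := v.isLt
  have c1 : min (u.val / q) 2 = u.val / q ∧ u.val / q ≤ 2 ∨
      min (u.val / q) 2 = 2 ∧ 2 ≤ u.val / q := by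
    rcases le_total (u.val / q) 2 with hh | hh
    · exact Or.inl ⟨min_eq_left hh, hh⟩
    · exact Or.inr ⟨min_eq_right hh, hh⟩
  have c2 : min (v.val / q) 2 = v.val / q ∧ v.val / q ≤ 2 ∨
      min (v.val / q) 2 = 2 ∧ 2 ≤ v.val / q := by
    rcases le_total (v.val / q) 2 with hh | hh
    · exact Or.inl ⟨min_eq_left hh, hh⟩
    · exact Or.inr ⟨min_eq_right hh, hh⟩
  have key : u.val / q = v.val / q ∨ (2 ≤ u.val / q ∧ 2 ≤ v.val / q) := by
    rcases c1 with ⟨e1, b1⟩ | ⟨e1, b1⟩ <;> rcases c2 with ⟨e2, b2⟩ | ⟨e2, b2⟩ <;>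
      rw [e1, e2] at hmin
    · exact Or.inl hmin
    · exact Or.inr ⟨le_of_eq hmin.symm, b2⟩
    · exact Or.inr ⟨b1, le_of_eq hmin⟩
    · exact Or.inr ⟨b1, b2⟩
  rcases key with hdiv | ⟨h1, h2⟩
  · have hdm1 := Nat.div_add_mod u.val q
    have hdm2 := Nat.div_add_mod v.val q
    have hm1 : u.val % q < q := Nat.mod_lt _ (by omega)
    have hm2 : v.val % q < q := Nat.mod_lt _ (by omega)
    rw [hdiv] at hdm1
    set K := q * (v.val / q) with hK
    omega
  · have hu2 : 2 * q ≤ u.val := (Nat.le_div_iff_mul_le (by omega)).mp h1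
    have hv2 : 2 * q ≤ v.val := (Nat.le_div_iff_mul_le (by omega)).mp h2
    omega

lemma partA (p q : ℕ) (hq : 1 ≤ q) (hp2 : 2 * q ≤ p) (hp3 : p ≤ 3 * q) :
    ∃ D : GraphOrientation (ratComplete p q), ¬ HasAltOddCycle D := by
  refine ⟨⟨fun a b => (ratComplete p q).Adj a b ∧ colA q b = colA q a + 1, ?_, ?_⟩, ?_⟩
  · intro a b
    constructor
    · intro h
      have hne := colA_ne hq hp3 h
      have key : ∀ x y : ZMod 3, x ≠ y → (y = x + 1 ∨ x = y + 1) := by decide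
      rcases key _ _ hne with h1 | h1
      · exact Or.inl ⟨h, h1⟩
      · exact Or.inr ⟨h.symm, h1⟩
    · rintro (⟨h, _⟩ | ⟨h, _⟩)
      · exact h
      · exact h.symm
  · rintro a b ⟨_, h1⟩ ⟨_, h2⟩
    rw [h1] at h2
    have h4 : colA q a + 0 = colA q a + 2 := by rw [add_zero]; nth_rewrite 1 [h2]; ring
    have h5 := add_left_cancel h4
    exact absurd h5 (by decide)
  · rintro ⟨n, f, hodd, ⟨finj, fadj⟩, i₀, hth, huniq⟩
    -- rule out n = 1
    have hn1 : n ≠ 1 := by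
      rintro rfl
      have h01 : (0 + 1 : ZMod 1) = 0 := Subsingleton.elim _ _
      have := fadj 0
      rw [h01] at this
      exact (ratComplete p q).loopless.irrefl _ this
    obtain ⟨M, hM⟩ := hodd
    haveI : NeZero n := ⟨by omega⟩
    set g : ZMod n → ZMod 3 := fun i => colA q (f i) - colA q (f (i - 1)) with hg
    -- sum of g is 0
    have hsum : (∑ i : ZMod n, g i) = 0 := by
      have h1 : (∑ i : ZMod n, colA q (f (i - 1))) = ∑ i : ZMod n, colA q (f i) :=
        Fintype.sum_bijective (· - (1 : ZMod n)) (Equiv.subRight (1 : ZMod n)).bijective _ _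
          (fun i => rfl)
      simp only [hg]
      rw [Finset.sum_sub_distrib, h1, sub_self]
    -- step relation away from i₀
    have hstep : ∀ i : ZMod n, i ≠ i₀ → g (i + 1) = - g i := by
      intro i hi
      have hsrcsink := not_not.mp (fun hh => hi (huniq i hh))
      have him : i + 1 - 1 = i := by ring
      rcases hsrcsink with ⟨⟨_, h1⟩, ⟨_, h2⟩⟩ | ⟨⟨_, h1⟩, ⟨_, h2⟩⟩
      · simp only [hg, him]
        rw [h1, h2]
        ring
      · simp only [hg, him]
        linear_combination h1 - h2
    -- value at i₀ + 1
    have hx : g (i₀ + 1) ≠ 0 := by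
      have him : i₀ + 1 - 1 = i₀ := by ring
      have e1 := fadj (i₀ - 1)
      rw [sub_add_cancel] at e1
      have e2 := fadj i₀
      have d1 : (fun a b => (ratComplete p q).Adj a b ∧ colA q b = colA q a + 1) (f (i₀-1)) (f i₀)
          ∨ (fun a b => (ratComplete p q).Adj a b ∧ colA q b = colA q a + 1) (f i₀) (f (i₀-1)) := by
        have hne := colA_ne hq hp3 e1
        have key : ∀ x y : ZMod 3, x ≠ y → (y = x + 1 ∨ x = y + 1) := by decide
        rcases key _ _ hne with h1 | h1
        · exact Or.inl ⟨e1, h1⟩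
        · exact Or.inr ⟨e1.symm, h1⟩
      have d2 : (fun a b => (ratComplete p q).Adj a b ∧ colA q b = colA q a + 1) (f i₀) (f (i₀+1))
          ∨ (fun a b => (ratComplete p q).Adj a b ∧ colA q b = colA q a + 1) (f (i₀+1)) (f i₀) := by
        have hne := colA_ne hq hp3 e2
        have key : ∀ x y : ZMod 3, x ≠ y → (y = x + 1 ∨ x = y + 1) := by decide
        rcases key _ _ hne with h1 | h1
        · exact Or.inl ⟨e2, h1⟩
        · exact Or.inr ⟨e2.symm, h1⟩
      rcases d1 with ⟨_, hd1⟩ | ⟨_, hd1⟩ <;> rcases d2 with ⟨_, hd2⟩ | ⟨_, hd2⟩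
      · -- in, out : g(i₀+1) = 1
        simp only [hg, him]
        rw [hd2]
        intro hcon
        have : (1 : ZMod 3) = 0 := by linear_combination hcon
        exact absurd this (by decide)
      · -- in, in : sink, excluded
        exact absurd (Or.inr ⟨⟨e1, hd1⟩, ⟨e2.symm, hd2⟩⟩) hth
      · -- out, out : source, excluded
        exact absurd (Or.inl ⟨⟨e1.symm, hd1⟩, ⟨e2, hd2⟩⟩) hth
      · -- out, in : g(i₀+1) = -1
        simp only [hg, him]
        rw [hd2]
        intro hcon
        have : (1 : ZMod 3) = 0 := by linear_combination -hcon
        exact absurd this (by decide)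
    have hkey : ∀ k, k < n →
        g (i₀ + 1 + (k : ZMod n)) = if k % 2 = 0 then g (i₀ + 1) else - g (i₀ + 1) := by
      intro k
      induction k with
      | zero => intro _; simp
      | succ k ih =>
        intro hk
        have ihh := ih (by omega)
        have hne : i₀ + 1 + (k : ZMod n) ≠ i₀ := by
          intro hcon
          have h0 : ((k + 1 : ℕ) : ZMod n) = 0 := by
            push_cast
            linear_combination hcon
          have hdvd := (ZMod.natCast_eq_zero_iff _ _).mp h0
          have := Nat.le_of_dvd (by omega) hdvd
          omega
        have hst := hstep _ hne
        have harr : i₀ + 1 + ((k + 1 : ℕ) : ZMod n) = (i₀ + 1 + (k : ZMod n)) + 1 := by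
          push_cast
          ring
        rw [harr, hst, ihh]
        by_cases hpar : k % 2 = 0
        · rw [if_pos hpar, if_neg (by omega)]
        · rw [if_neg hpar, if_pos (by omega), neg_neg]
    have hfin : (0 : ZMod 3) = g (i₀ + 1) := by
      rw [← hsum, sum_shift g (i₀ + 1),
        Finset.sum_congr rfl (fun k hk => hkey k (Finset.mem_range.mp hk))]
      have hps := parity_sum (g (i₀ + 1)) M
      rw [← hM] at hps
      exact hps
    exact hx hfin.symm

end AuxStatement14
namespace AuxStatement14

lemma zmod3_cases : ∀ i : ZMod 3, i = 0 ∨ i = 1 ∨ i = 2 := by decide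

lemma alt3_sink {p q : ℕ} (D : GraphOrientation (ratComplete p q))
    {u v w : Fin p} (huv : (ratComplete p q).Adj u v) (hvw : (ratComplete p q).Adj v w)
    (huw : (ratComplete p q).Adj u w)
    (d1 : D.dir u v) (d2 : D.dir w v) : HasAltOddCycle D := by
  classical
  set f : ZMod 3 → Fin p := fun i => if i = 0 then u else if i = 1 then v else w with hf
  have f0 : f 0 = u := by simp [hf]
  have f1 : f 1 = v := by simp [hf, show (1:ZMod 3) ≠ 0 by decide]
  have f2 : f 2 = w := by simp [hf, show (2:ZMod 3) ≠ 0 by decide, show (2:ZMod 3) ≠ 1 by decide]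
  have hne1 : u ≠ v := huv.2.2
  have hne2 : v ≠ w := hvw.2.2
  have hne3 : u ≠ w := huw.2.2
  have finj : Function.Injective f := by
    intro a b hab
    rcases zmod3_cases a with rfl | rfl | rfl <;> rcases zmod3_cases b with rfl | rfl | rfl <;>
      simp_all [f0, f1, f2] <;> tauto
  have fadj : ∀ i, (ratComplete p q).Adj (f i) (f (i + 1)) := by
    intro i
    rcases zmod3_cases i with rfl | rfl | rfl
    · rw [show (0 + 1 : ZMod 3) = 1 by decide, f0, f1]; exact huv
    · rw [show (1 + 1 : ZMod 3) = 2 by decide, f1, f2]; exact hvw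
    · rw [show (2 + 1 : ZMod 3) = 0 by decide, f2, f0]; exact huw.symm
  have i01 : (0 - 1 : ZMod 3) = 2 := by decide
  have i21 : (2 + 1 : ZMod 3) = 0 := by decide
  have i11 : (1 + 1 : ZMod 3) = 2 := by decide
  have i01' : (0 + 1 : ZMod 3) = 1 := by decide
  have i1m : (1 - 1 : ZMod 3) = 0 := by decide
  have i2m : (2 - 1 : ZMod 3) = 1 := by decide
  rcases (D.adj_iff u w).mp huw with d3 | d3
  · -- u → w : through w (index 2)
    refine ⟨3, f, ⟨1, by norm_num⟩, ⟨finj, fadj⟩, 2, ?_, ?_⟩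
    · show ¬(D.dir (f 2) (f (2 - 1)) ∧ D.dir (f 2) (f (2 + 1)) ∨ D.dir (f (2 - 1)) (f 2) ∧ D.dir (f (2 + 1)) (f 2))
      rw [i2m, i21, f0, f1, f2]
      rintro (⟨_, h⟩ | ⟨h, _⟩)
      · exact D.asymm _ _ d3 h
      · exact D.asymm _ _ d2 h
    · intro i hi
      rcases zmod3_cases i with rfl | rfl | rfl
      · have hi' : ¬(D.dir (f 0) (f (0 - 1)) ∧ D.dir (f 0) (f (0 + 1)) ∨ D.dir (f (0 - 1)) (f 0) ∧ D.dir (f (0 + 1)) (f 0)) := hi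
        rw [i01, i01', f0, f1, f2] at hi'
        exact absurd (Or.inl ⟨d3, d1⟩) hi'
      · have hi' : ¬(D.dir (f 1) (f (1 - 1)) ∧ D.dir (f 1) (f (1 + 1)) ∨ D.dir (f (1 - 1)) (f 1) ∧ D.dir (f (1 + 1)) (f 1)) := hi
        rw [i1m, i11, f0, f1, f2] at hi'
        exact absurd (Or.inr ⟨d1, d2⟩) hi'
      · rfl
  · -- w → u : through u (index 0)
    refine ⟨3, f, ⟨1, by norm_num⟩, ⟨finj, fadj⟩, 0, ?_, ?_⟩
    · show ¬(D.dir (f 0) (f (0 - 1)) ∧ D.dir (f 0) (f (0 + 1)) ∨ D.dir (f (0 - 1)) (f 0) ∧ D.dir (f (0 + 1)) (f 0))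
      rw [i01, i01', f0, f1, f2]
      rintro (⟨h, _⟩ | ⟨_, h⟩)
      · exact D.asymm _ _ d3 h
      · exact D.asymm _ _ d1 h
    · intro i hi
      rcases zmod3_cases i with rfl | rfl | rfl
      · rfl
      · have hi' : ¬(D.dir (f 1) (f (1 - 1)) ∧ D.dir (f 1) (f (1 + 1)) ∨ D.dir (f (1 - 1)) (f 1) ∧ D.dir (f (1 + 1)) (f 1)) := hi
        rw [i1m, i11, f0, f1, f2] at hi'
        exact absurd (Or.inr ⟨d1, d2⟩) hi'
      · have hi' : ¬(D.dir (f 2) (f (2 - 1)) ∧ D.dir (f 2) (f (2 + 1)) ∨ D.dir (f (2 - 1)) (f 2) ∧ D.dir (f (2 + 1)) (f 2)) := hi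
        rw [i2m, i21, f0, f1, f2] at hi'
        exact absurd (Or.inl ⟨d2, d3⟩) hi'

lemma alt3_source {p q : ℕ} (D : GraphOrientation (ratComplete p q))
    {u v w : Fin p} (huv : (ratComplete p q).Adj u v) (hvw : (ratComplete p q).Adj v w)
    (huw : (ratComplete p q).Adj u w)
    (d1 : D.dir v u) (d2 : D.dir v w) : HasAltOddCycle D := by
  classical
  set f : ZMod 3 → Fin p := fun i => if i = 0 then u else if i = 1 then v else w with hf
  have f0 : f 0 = u := by simp [hf]
  have f1 : f 1 = v := by simp [hf, show (1:ZMod 3) ≠ 0 by decide]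
  have f2 : f 2 = w := by simp [hf, show (2:ZMod 3) ≠ 0 by decide, show (2:ZMod 3) ≠ 1 by decide]
  have hne1 : u ≠ v := huv.2.2
  have hne2 : v ≠ w := hvw.2.2
  have hne3 : u ≠ w := huw.2.2
  have finj : Function.Injective f := by
    intro a b hab
    rcases zmod3_cases a with rfl | rfl | rfl <;> rcases zmod3_cases b with rfl | rfl | rfl <;>
      simp_all [f0, f1, f2] <;> tauto
  have fadj : ∀ i, (ratComplete p q).Adj (f i) (f (i + 1)) := by
    intro i
    rcases zmod3_cases i with rfl | rfl | rfl
    · rw [show (0 + 1 : ZMod 3) = 1 by decide, f0, f1]; exact huv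
    · rw [show (1 + 1 : ZMod 3) = 2 by decide, f1, f2]; exact hvw
    · rw [show (2 + 1 : ZMod 3) = 0 by decide, f2, f0]; exact huw.symm
  have i01 : (0 - 1 : ZMod 3) = 2 := by decide
  have i21 : (2 + 1 : ZMod 3) = 0 := by decide
  have i11 : (1 + 1 : ZMod 3) = 2 := by decide
  have i01' : (0 + 1 : ZMod 3) = 1 := by decide
  have i1m : (1 - 1 : ZMod 3) = 0 := by decide
  have i2m : (2 - 1 : ZMod 3) = 1 := by decide
  rcases (D.adj_iff u w).mp huw with d3 | d3
  · -- u → w : through u (index 0)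
    refine ⟨3, f, ⟨1, by norm_num⟩, ⟨finj, fadj⟩, 0, ?_, ?_⟩
    · show ¬(D.dir (f 0) (f (0 - 1)) ∧ D.dir (f 0) (f (0 + 1)) ∨ D.dir (f (0 - 1)) (f 0) ∧ D.dir (f (0 + 1)) (f 0))
      rw [i01, i01', f0, f1, f2]
      rintro (⟨_, h⟩ | ⟨h, _⟩)
      · exact D.asymm _ _ d1 h
      · exact D.asymm _ _ d3 h
    · intro i hi
      rcases zmod3_cases i with rfl | rfl | rfl
      · rfl
      · have hi' : ¬(D.dir (f 1) (f (1 - 1)) ∧ D.dir (f 1) (f (1 + 1)) ∨ D.dir (f (1 - 1)) (f 1) ∧ D.dir (f (1 + 1)) (f 1)) := hi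
        rw [i1m, i11, f0, f1, f2] at hi'
        exact absurd (Or.inl ⟨d1, d2⟩) hi'
      · have hi' : ¬(D.dir (f 2) (f (2 - 1)) ∧ D.dir (f 2) (f (2 + 1)) ∨ D.dir (f (2 - 1)) (f 2) ∧ D.dir (f (2 + 1)) (f 2)) := hi
        rw [i2m, i21, f0, f1, f2] at hi'
        exact absurd (Or.inr ⟨d2, d3⟩) hi'
  · -- w → u : through w (index 2)
    refine ⟨3, f, ⟨1, by norm_num⟩, ⟨finj, fadj⟩, 2, ?_, ?_⟩
    · show ¬(D.dir (f 2) (f (2 - 1)) ∧ D.dir (f 2) (f (2 + 1)) ∨ D.dir (f (2 - 1)) (f 2) ∧ D.dir (f (2 + 1)) (f 2))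
      rw [i2m, i21, f0, f1, f2]
      rintro (⟨h, _⟩ | ⟨_, h⟩)
      · exact D.asymm _ _ d2 h
      · exact D.asymm _ _ d3 h
    · intro i hi
      rcases zmod3_cases i with rfl | rfl | rfl
      · have hi' : ¬(D.dir (f 0) (f (0 - 1)) ∧ D.dir (f 0) (f (0 + 1)) ∨ D.dir (f (0 - 1)) (f 0) ∧ D.dir (f (0 + 1)) (f 0)) := hi
        rw [i01, i01', f0, f1, f2] at hi'
        exact absurd (Or.inr ⟨d3, d1⟩) hi'
      · have hi' : ¬(D.dir (f 1) (f (1 - 1)) ∧ D.dir (f 1) (f (1 + 1)) ∨ D.dir (f (1 - 1)) (f 1) ∧ D.dir (f (1 + 1)) (f 1)) := hi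
        rw [i1m, i11, f0, f1, f2] at hi'
        exact absurd (Or.inl ⟨d1, d2⟩) hi'
      · rfl

lemma tri_flow {p q : ℕ} (D : GraphOrientation (ratComplete p q))
    (hno : ¬ HasAltOddCycle D) {u v w : Fin p}
    (huv : (ratComplete p q).Adj u v) (hvw : (ratComplete p q).Adj v w)
    (huw : (ratComplete p q).Adj u w) :
    (D.dir u v ↔ D.dir v w) := by
  constructor
  · intro d1
    by_contra d2
    have d2' : D.dir w v := ((D.adj_iff v w).mp hvw).resolve_left d2
    exact hno (alt3_sink D huv hvw huw d1 d2')
  · intro d2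
    by_contra d1
    have d1' : D.dir v u := ((D.adj_iff u v).mp huv).resolve_left d1
    exact hno (alt3_source D huv hvw huw d1' d2)

end AuxStatement14
namespace AuxStatement14

lemma orient_struct {p q : ℕ} (hp0 : 0 < p) (hq : 1 ≤ q) (hp : 3 * q + 1 ≤ p)
    (D : GraphOrientation (ratComplete p q)) (hno : ¬ HasAltOddCycle D) :
    (∀ a : Fin p, D.dir a (sh hp0 a q) ∧ D.dir a (sh hp0 a (q + 1))) ∨
    (∀ a : Fin p, D.dir (sh hp0 a q) a ∧ D.dir (sh hp0 a (q + 1)) a) := by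
  classical
  set e : Fin p → Prop := fun a => D.dir a (sh hp0 a q) with he
  set e' : Fin p → Prop := fun a => D.dir a (sh hp0 a (q + 1)) with he'
  have t1 : ∀ a, e a ↔ e (sh hp0 a q) := by
    intro a
    have h := tri_flow D hno (adj_sh hp0 hq a q le_rfl (by omega))
      (adj_sh hp0 hq (sh hp0 a q) q le_rfl (by omega))
      (by rw [sh_sh]
          exact adj_sh hp0 hq a (q + q) (by omega) (by omega))
    rw [he]
    simp only
    rw [h]
  have t2 : ∀ a, e a ↔ e' (sh hp0 a q) := by
    intro a
    have h := tri_flow D hno (adj_sh hp0 hq a q le_rfl (by omega))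
      (adj_sh hp0 hq (sh hp0 a q) (q + 1) (by omega) (by omega))
      (by rw [sh_sh]
          exact adj_sh hp0 hq a (q + (q + 1)) (by omega) (by omega))
    rw [he, he']
    simp only
    rw [h]
  have t3 : ∀ a, e' a ↔ e (sh hp0 a (q + 1)) := by
    intro a
    have h := tri_flow D hno (adj_sh hp0 hq a (q + 1) (by omega) (by omega))
      (adj_sh hp0 hq (sh hp0 a (q + 1)) q le_rfl (by omega))
      (by rw [sh_sh]
          exact adj_sh hp0 hq a (q + 1 + q) (by omega) (by omega))
    rw [he, he']
    simp only
    rw [h]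
  have estep : ∀ b : Fin p, e b ↔ e (sh hp0 b 1) := by
    intro b
    set a : Fin p := sh hp0 b (p - 2 * q) with ha
    have h2q : sh hp0 a (2 * q) = b := by
      rw [ha, sh_sh, show p - 2 * q + 2 * q = p by omega, sh_p]
    have c1 : e a ↔ e b := by
      rw [t1 a, t1 (sh hp0 a q), sh_sh, show q + q = 2 * q by ring, h2q]
    have c2 : e a ↔ e (sh hp0 b 1) := by
      rw [t2 a, t3 (sh hp0 a q), sh_sh, show q + (q + 1) = 2 * q + 1 by ring,
        show sh hp0 a (2 * q + 1) = sh hp0 (sh hp0 a (2 * q)) 1 from (sh_sh hp0 a (2 * q) 1).symm,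
        h2q]
    rw [← c1, c2]
  have eshift : ∀ (k : ℕ) (b : Fin p), e b ↔ e (sh hp0 b k) := by
    intro k
    induction k with
    | zero => intro b; rw [sh_zero]
    | succ k ih =>
      intro b
      rw [ih b, estep (sh hp0 b k), sh_sh]
  have econst : ∀ a b : Fin p, e a → e b := by
    intro a b hea
    have hab : sh hp0 a (p + b.val - a.val) = b := by
      apply Fin.ext
      rw [sh_val]
      have h1 : a.val < p := a.isLt
      have h2 : b.val < p := b.isLt
      rw [show a.val + (p + b.val - a.val) = p + b.val by omega, Nat.add_mod_left,
        Nat.mod_eq_of_lt h2]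
    rw [← hab]
    exact (eshift (p + b.val - a.val) a).mp hea
  by_cases h0 : e ⟨0, hp0⟩
  · left
    intro a
    have hea : e a := econst _ _ h0
    refine ⟨hea, ?_⟩
    have := (t3 a).mpr (econst _ _ h0)
    exact this
  · right
    intro a
    have hne : ∀ b : Fin p, ¬ e b := fun b hb => h0 (econst _ _ hb)
    constructor
    · have := hne a
      rw [he] at this
      simp only at this
      exact ((D.adj_iff a (sh hp0 a q)).mp (adj_sh hp0 hq a q le_rfl (by omega))).resolve_left this
    · have hne' : ¬ e' a := fun hb => (hne _) ((t3 a).mp hb)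
      rw [he'] at hne'
      simp only at hne'
      exact ((D.adj_iff a (sh hp0 a (q + 1))).mp
        (adj_sh hp0 hq a (q + 1) (by omega) (by omega))).resolve_left hne'

end AuxStatement14
namespace AuxStatement14

def gB (p q : ℕ) (hp0 : 0 < p) (hqp : q < p) (j : ℕ) : Fin p :=
  if h0 : j = 0 then ⟨0, hp0⟩
  else if h2 : j % 2 = 0 then ⟨p - j / 2, by omega⟩
  else ⟨q - j / 2, by omega⟩

lemma gB_zero {p q : ℕ} (hp0 : 0 < p) (hqp : q < p) : (gB p q hp0 hqp 0).val = 0 := by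
  unfold gB
  rw [dif_pos rfl]

lemma gB_even {p q : ℕ} (hp0 : 0 < p) (hqp : q < p) {j : ℕ} (h0 : j ≠ 0) (h2 : j % 2 = 0) :
    (gB p q hp0 hqp j).val = p - j / 2 := by
  unfold gB
  rw [dif_neg h0, dif_pos h2]

lemma gB_odd {p q : ℕ} (hp0 : 0 < p) (hqp : q < p) {j : ℕ} (h2 : j % 2 = 1) :
    (gB p q hp0 hqp j).val = q - j / 2 := by
  unfold gB
  rw [dif_neg (by omega), dif_neg (by omega)]

lemma buildCycle {p q : ℕ} (hp0 : 0 < p) (hq : 1 ≤ q) (hp : 3 * q + 1 ≤ p)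
    (R : Fin p → Fin p → Prop) (Ra : ∀ u v, R u v → ¬ R v u)
    (Rq : ∀ a, R a (sh hp0 a q)) (Rq1 : ∀ a, R a (sh hp0 a (q + 1))) :
    ∃ f : ZMod (2 * q + 1) → Fin p,
      (ratComplete p q).IsCycleMap f ∧ IsAltCycle R f := by
  classical
  have hqp : q < p := by omega
  haveI : NeZero (2 * q + 1) := ⟨by omega⟩
  haveI : Fact (1 < 2 * q + 1) := ⟨by omega⟩
  set g : ℕ → Fin p := gB p q hp0 hqp with hgdef
  -- the three kinds of arcs of the cycle
  have arcA : ∀ j : ℕ, j % 2 = 0 → j + 2 ≤ 2 * q → R (g j) (g (j + 1)) := by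
    intro j h2 hle
    have h := Rq (g j)
    have heq : sh hp0 (g j) q = g (j + 1) := by
      apply Fin.ext
      rw [sh_val]
      have hodd : (j + 1) % 2 = 1 := by omega
      rw [hgdef, gB_odd hp0 hqp hodd]
      by_cases h0 : j = 0
      · rw [h0, gB_zero hp0 hqp]
        rw [mod_tight hp0 (by omega)]
        simp only [Nat.zero_add]
        rw [if_pos (by omega)]
        omega
      · rw [gB_even hp0 hqp h0 h2]
        rw [mod_tight hp0 (by omega)]
        rw [if_neg (by omega)]
        omega
    rwa [heq] at h
  have arcB : ∀ j : ℕ, j % 2 = 0 → 2 ≤ j → j ≤ 2 * q → R (g j) (g (j - 1)) := by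
    intro j h2 h2le hle
    have h := Rq1 (g j)
    have heq : sh hp0 (g j) (q + 1) = g (j - 1) := by
      apply Fin.ext
      rw [sh_val]
      have hodd : (j - 1) % 2 = 1 := by omega
      rw [hgdef, gB_odd hp0 hqp hodd, gB_even hp0 hqp (by omega) h2]
      rw [mod_tight hp0 (by omega)]
      rw [if_neg (by omega)]
      omega
    rwa [heq] at h
  have arcC : R (g (2 * q)) (g 0) := by
    have h := Rq (g (2 * q))
    have heq : sh hp0 (g (2 * q)) q = g 0 := by
      apply Fin.ext
      rw [sh_val]
      rw [hgdef, gB_zero hp0 hqp, gB_even hp0 hqp (by omega) (by omega)]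
      rw [mod_tight hp0 (by omega)]
      rw [if_neg (by omega)]
      omega
    rwa [heq] at h
  -- the cycle map
  set f : ZMod (2 * q + 1) → Fin p := fun i => g i.val with hfdef
  have hvlt : ∀ i : ZMod (2 * q + 1), i.val < 2 * q + 1 := fun i => ZMod.val_lt i
  have hip : ∀ i : ZMod (2 * q + 1), (i + 1).val = (i.val + 1) % (2 * q + 1) := by
    intro i
    rw [ZMod.val_add, ZMod.val_one]
  have him : ∀ i : ZMod (2 * q + 1), (i - 1).val = (i.val + 2 * q) % (2 * q + 1) := by
    intro i
    have h1 : (i - 1 : ZMod (2 * q + 1)) = i + ((2 * q : ℕ) : ZMod (2 * q + 1)) := by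
      have hneg : ((2 * q : ℕ) : ZMod (2 * q + 1)) = -1 := by
        have h2 : ((2 * q : ℕ) : ZMod (2 * q + 1)) + 1 = 0 := by
          have h3 := ZMod.natCast_self (2 * q + 1)
          rw [show 2 * q + 1 = (2 * q) + 1 from rfl, Nat.cast_add, Nat.cast_one] at h3
          exact h3
        exact eq_neg_of_add_eq_zero_left h2
      rw [hneg]
      ring
    rw [h1, ZMod.val_add, ZMod.val_natCast,
      Nat.mod_eq_of_lt (show 2 * q < 2 * q + 1 by omega)]
  -- injectivity
  have ginj : ∀ j k : ℕ, j ≤ 2 * q → k ≤ 2 * q → g j = g k → j = k := by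
    intro j k hj hk h
    have hval := congrArg Fin.val h
    by_cases j0 : j = 0 <;> by_cases k0 : k = 0
    · omega
    · rw [j0, gB_zero hp0 hqp] at hval
      by_cases k2 : k % 2 = 0
      · rw [gB_even hp0 hqp k0 k2] at hval
        omega
      · rw [gB_odd hp0 hqp (by omega)] at hval
        omega
    · rw [k0, gB_zero hp0 hqp] at hval
      by_cases j2 : j % 2 = 0
      · rw [gB_even hp0 hqp j0 j2] at hval
        omega
      · rw [gB_odd hp0 hqp (by omega)] at hval
        omega
    · by_cases j2 : j % 2 = 0 <;> by_cases k2 : k % 2 = 0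
      · rw [gB_even hp0 hqp j0 j2, gB_even hp0 hqp k0 k2] at hval
        omega
      · rw [gB_even hp0 hqp j0 j2, gB_odd hp0 hqp (by omega)] at hval
        omega
      · rw [gB_odd hp0 hqp (by omega), gB_even hp0 hqp k0 k2] at hval
        omega
      · rw [gB_odd hp0 hqp (by omega), gB_odd hp0 hqp (by omega)] at hval
        omega
  have finj : Function.Injective f := by
    intro a b hab
    have := ginj a.val b.val (by have := hvlt a; omega) (by have := hvlt b; omega) hab
    exact ZMod.val_injective _ this
  -- adjacency of consecutive vertices
  have fadj : ∀ i, (ratComplete p q).Adj (f i) (f (i + 1)) := by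
    intro i
    show (ratComplete p q).Adj (g i.val) (g ((i + 1).val))
    rw [hip i]
    set j := i.val with hj
    have hjlt : j < 2 * q + 1 := hvlt i
    by_cases hj2q : j = 2 * q
    · rw [hj2q, Nat.mod_self]
      refine rc_adj hq (p - q) (by omega) (by omega) (Or.inr ?_)
      rw [hgdef, gB_zero hp0 hqp, gB_even hp0 hqp (by omega) (by omega)]
      omega
    · rw [Nat.mod_eq_of_lt (by omega)]
      by_cases h2 : j % 2 = 0
      · by_cases h0 : j = 0
        · refine rc_adj hq q (by omega) (by omega) (Or.inl ?_)
          rw [h0, hgdef, gB_zero hp0 hqp, gB_odd hp0 hqp (by norm_num)]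
          omega
        · refine rc_adj hq (p - q) (by omega) (by omega) (Or.inr ?_)
          rw [hgdef, gB_even hp0 hqp h0 h2, gB_odd hp0 hqp (by omega)]
          omega
      · refine rc_adj hq (p - q - 1) (by omega) (by omega) (Or.inl ?_)
        rw [hgdef, gB_odd hp0 hqp (by omega), gB_even hp0 hqp (by omega) (by omega)]
        omega
  refine ⟨f, ⟨finj, fadj⟩, 0, ?_, ?_⟩
  · -- the through vertex 0
    show ¬ ((R (f 0) (f (0 - 1)) ∧ R (f 0) (f (0 + 1))) ∨
       (R (f (0 - 1)) (f 0) ∧ R (f (0 + 1)) (f 0)))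
    have hv0 : (0 : ZMod (2 * q + 1)).val = 0 := ZMod.val_zero
    have hvm : ((0 : ZMod (2 * q + 1)) - 1).val = 2 * q := by
      rw [him, hv0, Nat.zero_add, Nat.mod_eq_of_lt (by omega)]
    have hvp : ((0 : ZMod (2 * q + 1)) + 1).val = 1 := by
      rw [hip, hv0, Nat.mod_eq_of_lt (by omega)]
    have e1 : f (0 - 1) = g (2 * q) := by
      show g ((0 - 1 : ZMod (2 * q + 1)).val) = g (2 * q)
      rw [hvm]
    have e2 : f (0 + 1) = g 1 := by
      show g ((0 + 1 : ZMod (2 * q + 1)).val) = g 1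
      rw [hvp]
    have e0 : f 0 = g 0 := by
      show g ((0 : ZMod (2 * q + 1)).val) = g 0
      rw [hv0]
    rw [e0, e1, e2]
    have a1 : R (g 0) (g 1) := arcA 0 (by norm_num) (by omega)
    rintro (⟨h, _⟩ | ⟨_, h⟩)
    · exact Ra _ _ arcC h
    · exact Ra _ _ a1 h
  · -- uniqueness
    intro i hi
    by_contra hi0
    have hi' : ¬ ((R (f i) (f (i - 1)) ∧ R (f i) (f (i + 1))) ∨
       (R (f (i - 1)) (f i) ∧ R (f (i + 1)) (f i))) := hi
    apply hi'
    set j := i.val with hj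
    have hjlt : j < 2 * q + 1 := hvlt i
    have hjne : j ≠ 0 := by
      intro h
      apply hi0
      have hvv : i.val = (0 : ZMod (2 * q + 1)).val := by rw [ZMod.val_zero]; exact h
      exact ZMod.val_injective _ hvv
    have evi : f i = g j := rfl
    have evm : f (i - 1) = g (j - 1) := by
      show g ((i - 1).val) = g (j - 1)
      rw [him, mod_tight (by omega) (by omega), if_neg (by omega)]
      congr 1
      omega
    by_cases h2 : j % 2 = 0
    · -- source
      left
      have evp : f (i + 1) = g ((j + 1) % (2 * q + 1)) := by
        show g ((i + 1).val) = _
        rw [hip, ← hj]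
      constructor
      · rw [evi, evm]
        exact arcB j h2 (by omega) (by omega)
      · rw [evi, evp]
        by_cases hj2q : j = 2 * q
        · rw [hj2q, Nat.mod_self]
          exact arcC
        · rw [Nat.mod_eq_of_lt (by omega)]
          exact arcA j h2 (by omega)
    · -- sink
      right
      have evp : f (i + 1) = g (j + 1) := by
        show g ((i + 1).val) = _
        rw [hip, ← hj, Nat.mod_eq_of_lt (by omega)]
      constructor
      · rw [evi, evm]
        have harc := arcA (j - 1) (by omega) (by omega)
        have hjj : j - 1 + 1 = j := by omega
        rwa [hjj] at harc
      · rw [evi, evp]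
        have harc := arcB (j + 1) (by omega) (by omega) (by omega)
        have hjj : j + 1 - 1 = j := by omega
        rwa [hjj] at harc

end AuxStatement14
namespace AuxStatement14

lemma alt_flip {V : Type u} {R : V → V → Prop} {n : ℕ} {f : ZMod n → V}
    (h : IsAltCycle R f) : IsAltCycle (fun a b => R b a) f := by
  obtain ⟨i, hi, hu⟩ := h
  exact ⟨i, by tauto, fun y hy => hu y (by tauto)⟩

lemma partB (p q : ℕ) (hq : 1 ≤ q) (hp : 3 * q + 1 ≤ p)
    (D : GraphOrientation (ratComplete p q)) : HasAltOddCycle D := by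
  by_contra hno
  have hp0 : 0 < p := by omega
  rcases orient_struct hp0 hq hp D hno with hpos | hneg
  · obtain ⟨f, hcm, halt⟩ := buildCycle hp0 hq hp D.dir (D.asymm)
      (fun a => (hpos a).1) (fun a => (hpos a).2)
    exact hno ⟨2 * q + 1, f, ⟨q, by ring⟩, hcm, halt⟩
  · obtain ⟨f, hcm, halt⟩ := buildCycle hp0 hq hp (fun a b => D.dir b a)
      (fun u v h1 h2 => D.asymm _ _ h2 h1)
      (fun a => (hneg a).1) (fun a => (hneg a).2)
    exact hno ⟨2 * q + 1, f, ⟨q, by ring⟩, hcm, alt_flip halt⟩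

end AuxStatement14

theorem statement14 (p q : ℕ) (hq : 1 ≤ q) (hp : 2 * q ≤ p) :
    (∃ D : GraphOrientation (ratComplete p q), ¬ HasAltOddCycle D) ↔ p ≤ 3 * q := by
  constructor
  · rintro ⟨D, hD⟩
    by_contra hle
    exact hD (AuxStatement14.partB p q hq (by omega) D)
  · intro hp3
    exact AuxStatement14.partA p q hq hp hp3
end
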